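/- Lower bound on the number of routes serving a group: let V_k be a finite set with demands q_i ≥ 0 and weights s_i ≥ 0 for i ∈ V_k, let α be a real number, Q > 0, and define Z = min{ ∑_{i∈T} q_i : T ⊆ V_k, ∑_{i∈T} s_i ≥ α·∑_{i∈V_k} s_i }, assuming this set of subsets T is nonempty. If R₁, …, R_m are pairwise disjoint subsets of V_k such that ∑_{i∈R_j} q_i ≤ Q for every j and the union U = R₁ ∪ ⋯ ∪ R_m satisfies ∑_{i∈U} s_i ≥ α·∑_{i∈V_k} s_i, then m ≥ ⌈Z/Q⌉. -/

import Mathlib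

/-- Lower bound on the number of routes serving a group: if `Z` is the minimum total
demand of a subset of `Vk` whose total weight attains the service level
`α * ∑ i in Vk, s i`, and pairwise disjoint capacity-feasible route intersections
`R 1, …, R m ⊆ Vk` jointly attain the service level, then `m ≥ ⌈Z / Q⌉`. -/
theorem routes_lower_bound {ι : Type*} [DecidableEq ι] (Vk : Finset ι)
    (q s : ι → ℝ) (hq : ∀ i ∈ Vk, 0 ≤ q i) (hs : ∀ i ∈ Vk, 0 ≤ s i)
    (α : ℝ) (Q : ℝ) (hQ : 0 < Q) (Z : ℝ)
    (hZ : IsLeast {x : ℝ | ∃ T ⊆ Vk,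
        α * ∑ i ∈ Vk, s i ≤ ∑ i ∈ T, s i ∧ x = ∑ i ∈ T, q i} Z)
    (m : ℕ) (R : Fin m → Finset ι) (hRsub : ∀ j, R j ⊆ Vk)
    (hdisj : ∀ j j', j ≠ j' → Disjoint (R j) (R j'))
    (hcap : ∀ j, ∑ i ∈ R j, q i ≤ Q)
    (hserv : α * ∑ i ∈ Vk, s i ≤ ∑ i ∈ Finset.univ.biUnion R, s i) :
    ⌈Z / Q⌉ ≤ (m : ℤ) := by
  set U := Finset.univ.biUnion R with hU
  have hUsub : U ⊆ Vk := Finset.biUnion_subset.mpr (fun j _ => hRsub j)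
  have hZle : Z ≤ ∑ i ∈ U, q i := hZ.2 ⟨U, hUsub, hserv, rfl⟩
  have hsum : ∑ i ∈ U, q i = ∑ j : Fin m, ∑ i ∈ R j, q i := by
    rw [hU, Finset.sum_biUnion]
    intro j _ j' _ hjj'
    exact hdisj j j' hjj'
  have hmQ : ∑ i ∈ U, q i ≤ m * Q := by
    rw [hsum]
    calc ∑ j : Fin m, ∑ i ∈ R j, q i ≤ ∑ j : Fin m, Q :=
          Finset.sum_le_sum (fun j _ => hcap j)
      _ = m * Q := by simp [mul_comm]
  have h : Z / Q ≤ (m : ℝ) := by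
    rw [div_le_iff₀ hQ]
    linarith
  calc ⌈Z / Q⌉ ≤ ⌈(m : ℝ)⌉ := Int.ceil_le_ceil h
    _ = (m : ℤ) := by exact_mod_cast Int.ceil_intCast (m : ℤ)
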